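/- arXiv:1403.5913 — 4 statements merged into one kernel-verified Lean document; each statement's English description precedes it below -/
import Mathlib

section
/- Suppose an n-arm b₁,…,bₙ in ℝ³ satisfies the parallel condition for all r = 2,…,n, i.e. (b₂+…+b_{r-1}) − (b_{r+1}+…+bₙ) ∈ ℝ·b₁ for each r. If n is odd, then b_r ∈ ℝ·b₁ for all r = 2,…,n (the arm is aligned). -/
/-- If an `n`-arm (`n` odd) satisfies the parallel condition `P_r` for all
`r = 2, …, n`, then every `b_r` (`2 ≤ r ≤ n`) is a scalar multiple of `b₁`. -/
theorem stmt_9 (n : ℕ) (hn : Odd n) (b : ℕ → Fin 3 → ℝ) (hb : b 1 ≠ 0)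
    (hpar : ∀ r ∈ Finset.Icc 2 n, ∃ t : ℝ,
      (∑ i ∈ Finset.Icc 2 (r - 1), b i) - (∑ i ∈ Finset.Icc (r + 1) n, b i) = t • b 1) :
    ∀ r ∈ Finset.Icc 2 n, ∃ t : ℝ, b r = t • b 1 := by
  intro r hr
  rw [Finset.mem_Icc] at hr
  obtain ⟨hr2, hrn⟩ := hr
  have hn3 : 3 ≤ n := by
    obtain ⟨m, hm⟩ := hn; omega
  set M := Submodule.span ℝ {b 1} with hM
  have hmem : ∀ x : Fin 3 → ℝ, x ∈ M ↔ ∃ t : ℝ, x = t • b 1 := by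
    intro x
    rw [hM, Submodule.mem_span_singleton]
    constructor <;> rintro ⟨t, ht⟩ <;> exact ⟨t, ht.symm⟩
  have hsplit : ∀ s, s ≤ n → ∑ i ∈ Finset.Icc s n, b i
      = b s + ∑ i ∈ Finset.Icc (s+1) n, b i := by
    intro s hs
    rw [← Finset.Ioc_insert_left hs, Finset.sum_insert Finset.left_notMem_Ioc,
      Finset.Icc_add_one_left_eq_Ioc]
  have hP : ∀ s, 2 ≤ s → s ≤ n →
      ((∑ i ∈ Finset.Icc 2 (s-1), b i) - ∑ i ∈ Finset.Icc (s+1) n, b i) ∈ M := by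
    intro s h2 h3
    rw [hmem]
    exact hpar s (Finset.mem_Icc.mpr ⟨h2, h3⟩)
  have hpair : ∀ s, 2 ≤ s → s + 1 ≤ n → b s + b (s+1) ∈ M := by
    intro s h2 h3
    have e1 := hP s h2 (by omega)
    have e2 := hP (s+1) (by omega) h3
    have hsum1 : ∑ i ∈ Finset.Icc 2 (s+1-1), b i
        = (∑ i ∈ Finset.Icc 2 (s-1), b i) + b s := by
      have h := Finset.sum_Icc_succ_top (f := b) (show 2 ≤ (s-1)+1 by omega)
      have hs1 : (s-1)+1 = s := by omega
      rw [hs1] at h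
      simpa using h
    have hsum2 : ∑ i ∈ Finset.Icc (s+1) n, b i
        = b (s+1) + ∑ i ∈ Finset.Icc (s+1+1) n, b i := hsplit (s+1) h3
    rw [hsum1] at e2
    rw [hsum2] at e1
    have := Submodule.sub_mem M e2 e1
    have key : (∑ i ∈ Finset.Icc 2 (s-1), b i) + b s - ∑ i ∈ Finset.Icc (s+1+1) n, b i
        - ((∑ i ∈ Finset.Icc 2 (s-1), b i)
          - (b (s+1) + ∑ i ∈ Finset.Icc (s+1+1) n, b i)) = b s + b (s+1) := by
      abel
    rwa [key] at this
  have htail : ∀ k : ℕ, ∀ s, 2 ≤ s → s ≤ n + 1 → n + 1 - s = 2*k →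
      (∑ i ∈ Finset.Icc s n, b i) ∈ M := by
    intro k
    induction k with
    | zero =>
      intro s h2 h3 h4
      have hs : s = n + 1 := by omega
      subst hs
      rw [Finset.Icc_eq_empty (by omega), Finset.sum_empty]
      exact Submodule.zero_mem M
    | succ k ih =>
      intro s h2 h3 h4
      have hs1 : s + 1 ≤ n := by omega
      have : ∑ i ∈ Finset.Icc s n, b i
          = (b s + b (s+1)) + ∑ i ∈ Finset.Icc (s+1+1) n, b i := by
        rw [hsplit s (by omega), hsplit (s+1) hs1]; abel
      rw [this]
      exact Submodule.add_mem M (hpair s h2 hs1)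
        (ih (s+1+1) (by omega) (by omega) (by omega))
  have h3n : (∑ i ∈ Finset.Icc 3 n, b i) ∈ M := by
    have h := hP 2 le_rfl (by omega)
    rw [Finset.Icc_eq_empty (by omega), Finset.sum_empty, zero_sub] at h
    simpa using Submodule.neg_mem M h
  have h4n : (∑ i ∈ Finset.Icc 4 n, b i) ∈ M := by
    refine htail ((n-3)/2) 4 (by omega) (by omega) ?_
    obtain ⟨m, hm⟩ := hn; omega
  have hb3 : b 3 ∈ M := by
    have h := Submodule.sub_mem M h3n h4n
    rw [hsplit 3 hn3] at h
    simpa using h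
  have hall : ∀ s, 3 ≤ s → s ≤ n → b s ∈ M := by
    intro s hs3
    induction s, hs3 using Nat.le_induction with
    | base => intro _; exact hb3
    | succ s hs ih =>
      intro hsn
      have hbs : b s ∈ M := ih (by omega)
      have := Submodule.sub_mem M (hpair s (by omega) hsn) hbs
      simpa using this
  have hb2 : b 2 ∈ M := by
    have := Submodule.sub_mem M (hpair 2 le_rfl hn3) hb3
    simpa using this
  rw [← hmem]
  rcases Nat.lt_or_ge r 3 with h | h
  · have : r = 2 := by omega
    rw [this]; exact hb2
  · exact hall r h hrn
end

section
/- Suppose an n-arm b₁,…,bₙ in ℝ³ satisfies the parallel condition for all r = 2,…,n. If n is even, then b_r + b_{r+1} ∈ ℝ·b₁ for all r = 2,…,n−1. -/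
/-- If an `n`-arm (`n` even) satisfies the parallel condition `P_r` for all
`r = 2, …, n`, then `b_r + b_{r+1}` is a scalar multiple of `b₁` for `2 ≤ r ≤ n-1`. -/
theorem stmt_10 (n : ℕ) (hn : Even n) (b : ℕ → Fin 3 → ℝ) (hb : b 1 ≠ 0)
    (hpar : ∀ r ∈ Finset.Icc 2 n, ∃ t : ℝ,
      (∑ i ∈ Finset.Icc 2 (r - 1), b i) - (∑ i ∈ Finset.Icc (r + 1) n, b i) = t • b 1) :
    ∀ r ∈ Finset.Icc 2 (n - 1), ∃ t : ℝ, b r + b (r + 1) = t • b 1 := by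
  intro r hr
  simp only [Finset.mem_Icc] at hr
  obtain ⟨hr2, hrn⟩ := hr
  have hn3 : 3 ≤ n := by omega
  have hrn' : r + 1 ≤ n := by omega
  obtain ⟨t1, h1⟩ := hpar r (Finset.mem_Icc.mpr ⟨hr2, by omega⟩)
  obtain ⟨t2, h2⟩ := hpar (r + 1) (Finset.mem_Icc.mpr ⟨by omega, hrn'⟩)
  have e1 : ∑ i ∈ Finset.Icc 2 r, b i = ∑ i ∈ Finset.Icc 2 (r - 1), b i + b r := by
    have h : insert ((r - 1) + 1) (Finset.Icc 2 (r - 1)) = Finset.Icc 2 ((r - 1) + 1) :=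
      Finset.insert_Icc_right_eq_Icc_add_one (by omega)
    have hr1 : r - 1 + 1 = r := by omega
    rw [hr1] at h
    rw [← h, Finset.sum_insert (by simp [Finset.mem_Icc]; omega)]
    ring
  have e2 : ∑ i ∈ Finset.Icc (r + 1) n, b i = b (r + 1) + ∑ i ∈ Finset.Icc (r + 2) n, b i := by
    have h : insert (r + 1) (Finset.Icc ((r + 1) + 1) n) = Finset.Icc (r + 1) n :=
      Finset.insert_Icc_add_one_left_eq_Icc hrn'
    rw [← h, Finset.sum_insert (by simp)]
  have hred : (r + 1 - 1) = r := by omega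
  rw [hred, e1] at h2
  rw [e2] at h1
  refine ⟨t2 - t1, ?_⟩
  have := sub_eq_sub_iff_sub_eq_sub.mp (congrArg₂ Sub.sub h2 h1)
  rw [sub_smul]
  linear_combination (norm := module) h2 - h1
end

section
/- Suppose for each r = 2,…,n the arm vectors satisfy b_r^⊥ ⊥ ((b₂+…+b_{r-1}) − (b_{r+1}+…+bₙ))^⊥ where v^⊥ denotes the component of v orthogonal to b₁. Then for each r, (b₂^⊥ + … + b_{r-1}^⊥) ⊥ (b_r^⊥ + … + bₙ^⊥). -/
open Matrix

/-- Writing `v^⊥ = v - (⟨v,b₁⟩/⟨b₁,b₁⟩)·b₁` for the component of `v` orthogonal to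
`b₁`, if `b_r^⊥ ⊥ (b₂^⊥+⋯+b_{r-1}^⊥) − (b_{r+1}^⊥+⋯+bₙ^⊥)` for every `r = 2, …, n`,
then `(b₂^⊥+⋯+b_{r-1}^⊥) ⊥ (b_r^⊥+⋯+bₙ^⊥)` for every such `r`. -/
theorem stmt_11 (n : ℕ) (b : ℕ → Fin 3 → ℝ) (b₁ : Fin 3 → ℝ) (hb : b₁ ≠ 0)
    (perp : (Fin 3 → ℝ) → (Fin 3 → ℝ))
    (hperp : ∀ v, perp v = v - ((v ⬝ᵥ b₁) / (b₁ ⬝ᵥ b₁)) • b₁)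
    (h : ∀ r ∈ Finset.Icc 2 n,
      perp (b r) ⬝ᵥ ((∑ i ∈ Finset.Icc 2 (r - 1), perp (b i)) -
        ∑ i ∈ Finset.Icc (r + 1) n, perp (b i)) = 0) :
    ∀ r ∈ Finset.Icc 2 n,
      (∑ i ∈ Finset.Icc 2 (r - 1), perp (b i)) ⬝ᵥ
        (∑ i ∈ Finset.Icc r n, perp (b i)) = 0 := by
  have key : ∀ r, 2 ≤ r → r ≤ n →
      (∑ i ∈ Finset.Icc 2 (r - 1), perp (b i)) ⬝ᵥ
        (∑ i ∈ Finset.Icc r n, perp (b i)) = 0 := by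
    intro r hr
    induction r, hr using Nat.le_induction with
    | base =>
      intro _
      simp [show Finset.Icc 2 1 = ∅ from rfl]
    | succ r hr ih =>
      intro hrn
      have hrn' : r ≤ n := le_trans (Nat.le_succ r) hrn
      have ihr := ih hrn'
      have hr' := h r (Finset.mem_Icc.mpr ⟨hr, hrn'⟩)
      -- split sums
      have hS : (∑ i ∈ Finset.Icc 2 (r + 1 - 1), perp (b i)) =
          (∑ i ∈ Finset.Icc 2 (r - 1), perp (b i)) + perp (b r) := by
        have : r + 1 - 1 = (r - 1) + 1 := by omega
        rw [this, Finset.sum_Icc_succ_top (by omega)]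
        have h2 : r - 1 + 1 = r := by omega
        rw [h2]
      have hT : (∑ i ∈ Finset.Icc r n, perp (b i)) =
          perp (b r) + ∑ i ∈ Finset.Icc (r + 1) n, perp (b i) := by
        have hins : Finset.Icc r n = insert r (Finset.Icc (r + 1) n) := by
          rw [Finset.Icc_add_one_left_eq_Ioc, Finset.Ioc_insert_left hrn']
        rw [hins, Finset.sum_insert (by simp)]
      rw [hS]
      rw [hT] at ihr
      set S := ∑ i ∈ Finset.Icc 2 (r - 1), perp (b i)
      set T := ∑ i ∈ Finset.Icc (r + 1) n, perp (b i)
      have hsym : S ⬝ᵥ perp (b r) = perp (b r) ⬝ᵥ S := dotProduct_comm _ _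
      simp only [dotProduct_sub, dotProduct_add, add_dotProduct] at *
      linarith [dotProduct_comm S (perp (b r))]
  intro r hr
  obtain ⟨h1, h2⟩ := Finset.mem_Icc.mp hr
  exact key r h1 h2
end

section
/- At each of the four points (bc,ac,ab), (−bc,ac,−ab), (−bc,−ac,ab), (bc,−ac,−ab) with a,b,c > 0, the Hessian of F(x,y,z) = 2xyz − a²x² − b²y² − c²z² + a²b²c² is nondegenerate and has exactly two negative eigenvalues and one positive eigenvalue (Morse index 2). -/
open Matrix

lemma trace_eq_sum_eig {A : Matrix (Fin 3) (Fin 3) ℝ} (hA : A.IsHermitian) :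
    A.trace = ∑ i, hA.eigenvalues i := by
  conv_lhs => rw [hA.spectral_theorem]
  rw [Unitary.conjStarAlgAut_apply, Matrix.trace_mul_cycle, Unitary.coe_star_mul_self, Matrix.one_mul]
  simp [Matrix.trace_diagonal]

lemma sign_aux (e : Fin 3 → ℝ) (hprod : 0 < e 0 * e 1 * e 2)
    (hsum : e 0 + e 1 + e 2 < 0) :
    (Finset.univ.filter fun i => e i < 0).card = 2 ∧
    (Finset.univ.filter fun i => 0 < e i).card = 1 := by
  rcases lt_trichotomy (e 0) 0 with h0 | h0 | h0 <;>
  rcases lt_trichotomy (e 1) 0 with h1 | h1 | h1 <;>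
  rcases lt_trichotomy (e 2) 0 with h2 | h2 | h2 <;>
  first
    | (exfalso; revert hprod; simp only [h0, h1, h2, zero_mul, mul_zero]; exact lt_irrefl 0)
    | (exfalso; nlinarith [mul_pos_of_neg_of_neg h0 h1,
        mul_pos_of_neg_of_neg h1 h2, mul_pos_of_neg_of_neg h0 h2])
    | (exfalso; nlinarith [mul_pos h0 h1, mul_pos h1 h2, mul_pos h0 h2])
    | (exfalso; nlinarith [mul_pos h1 h2])
    | (exfalso; nlinarith [mul_pos h0 h2])
    | (exfalso; nlinarith [mul_pos h0 h1])
    | (constructor <;>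
        · rw [Finset.card_filter, Fin.sum_univ_three]
          norm_num [h0, h1, h2, h0.asymm, h1.asymm, h2.asymm])

/-- At each of the four points `(bc,ac,ab)`, `(−bc,ac,−ab)`, `(−bc,−ac,ab)`,
`(bc,−ac,−ab)` the Hessian `2·[[−a², z, y],[z, −b², x],[y, x, −c²]]` of
`F(x,y,z) = 2xyz − a²x² − b²y² − c²z² + a²b²c²` is nondegenerate and has exactly
two negative and one positive eigenvalue (Morse index 2). -/
theorem stmt_17 (a b c : ℝ) (ha : 0 < a) (hb : 0 < b) (hc : 0 < c) :
    ∀ x y z : ℝ,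
      ((x, y, z) = (b * c, a * c, a * b) ∨ (x, y, z) = (-(b * c), a * c, -(a * b)) ∨
        (x, y, z) = (-(b * c), -(a * c), a * b) ∨
        (x, y, z) = (b * c, -(a * c), -(a * b))) →
      ∀ M : Matrix (Fin 3) (Fin 3) ℝ,
        M = (2 : ℝ) • !![-a ^ 2, z, y; z, -b ^ 2, x; y, x, -c ^ 2] →
        M.det ≠ 0 ∧
          ∀ hM : M.IsHermitian,
            (Finset.univ.filter fun i => hM.eigenvalues i < 0).card = 2 ∧
            (Finset.univ.filter fun i => 0 < hM.eigenvalues i).card = 1 := by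
  intro x y z hpt M hMdef
  have key : M.det = 32 * (a * b * c) ^ 2 ∧ M.trace = -2 * (a ^ 2 + b ^ 2 + c ^ 2) := by
    rcases hpt with h | h | h | h <;>
      (simp only [Prod.mk.injEq] at h; obtain ⟨hx, hy, hz⟩ := h;
       subst hx; subst hy; subst hz; subst hMdef) <;>
      constructor <;>
      · simp [Matrix.det_fin_three, Matrix.trace_fin_three, Matrix.smul_apply]
        ring
  obtain ⟨hdet, htr⟩ := key
  have hdetpos : 0 < M.det := by rw [hdet]; positivity
  refine ⟨ne_of_gt hdetpos, fun hM => ?_⟩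
  have hprod : 0 < hM.eigenvalues 0 * hM.eigenvalues 1 * hM.eigenvalues 2 := by
    have h := hM.det_eq_prod_eigenvalues
    rw [Fin.prod_univ_three] at h
    rw [h] at hdetpos
    exact hdetpos
  have hsum : hM.eigenvalues 0 + hM.eigenvalues 1 + hM.eigenvalues 2 < 0 := by
    have h := trace_eq_sum_eig hM
    rw [Fin.sum_univ_three] at h
    have hpos : 0 < a ^ 2 + b ^ 2 + c ^ 2 := by positivity
    rw [htr] at h
    linarith
  exact sign_aux _ hprod hsum
end
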